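/- Let X be a Hilbert space, Xₙ ⊆ X closed subspaces with orthogonal projections pₙ satisfying pₙ x → x for all x. Let T : X → X be compact and Tₙ : Xₙ → Xₙ bounded operators satisfying the uniform convergence ‖Tₙ pₙ − pₙ T‖_{L(X, X)} → 0. Then Tₙ converges compactly to T: Tₙ converges discretely to T, and for any bounded sequence xₙ ∈ Xₙ with ‖xₙ‖ ≤ C, the sequence (Tₙ xₙ) has a subsequence that P-converges to some y ∈ X. -/

import Mathlib

open Filter Topology

/-- Lemma 3.4: If `T` is compact and `Tₙ → T` uniformly
(`‖Tₙ pₙ - pₙ T‖_{L(X,X)} → 0`, expressed via a vanishing sequence of bounds), then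
`Tₙ → T` compactly: `Tₙ → T` discretely, and every bounded sequence `xₙ ∈ Xₙ` yields a
subsequence of `(Tₙ xₙ)` that P-converges to some `y ∈ X`. -/
theorem uniform_convergence_implies_compact_convergence
    {X : Type*} [NormedAddCommGroup X] [InnerProductSpace ℂ X] [CompleteSpace X]
    (K : ℕ → Submodule ℂ X) [∀ n, Submodule.HasOrthogonalProjection (K n)]
    (happrox : ∀ x : X,
      Tendsto (fun n => ‖((Submodule.orthogonalProjectionOnto (K n) x : K n) : X) - x‖) atTop (𝓝 0))
    (T : X →L[ℂ] X) (hT : IsCompactOperator T)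
    (Tn : ∀ n, (K n) →L[ℂ] (K n))
    (hunif : ∃ ε : ℕ → ℝ, Tendsto ε atTop (𝓝 0) ∧ ∀ (n : ℕ) (x : X),
      ‖((Tn n (Submodule.orthogonalProjectionOnto (K n) x) : K n) : X) -
        ((Submodule.orthogonalProjectionOnto (K n) (T x) : K n) : X)‖ ≤ ε n * ‖x‖) :
    (∀ (x₀ : X) (x : ∀ n, K n),
      Tendsto (fun n => ‖(x n : X) - ((Submodule.orthogonalProjectionOnto (K n) x₀ : K n) : X)‖) atTop (𝓝 0) →
      Tendsto (fun n => ‖((Tn n (x n) : K n) : X) -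
        ((Submodule.orthogonalProjectionOnto (K n) (T x₀) : K n) : X)‖) atTop (𝓝 0)) ∧
    (∀ (x : ∀ n, K n) (C : ℝ), (∀ n, ‖(x n : X)‖ ≤ C) →
      ∃ (φ : ℕ → ℕ) (y : X), StrictMono φ ∧
        Tendsto (fun k => ‖((Tn (φ k) (x (φ k)) : K (φ k)) : X) -
          ((Submodule.orthogonalProjectionOnto (K (φ k)) y : K (φ k)) : X)‖) atTop (𝓝 0)) := by
  obtain ⟨ε₀, hε₀, hb₀⟩ := hunif
  set ε : ℕ → ℝ := fun n => max (ε₀ n) 0 with hεdef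
  have hεnn : ∀ n, 0 ≤ ε n := fun n => le_max_right _ _
  have hε : Tendsto ε atTop (𝓝 0) := by
    have := hε₀.max (tendsto_const_nhds (x := (0:ℝ)))
    simpa using this
  have hb : ∀ (n : ℕ) (x : X),
      ‖((Tn n (Submodule.orthogonalProjectionOnto (K n) x) : K n) : X) -
        ((Submodule.orthogonalProjectionOnto (K n) (T x) : K n) : X)‖ ≤ ε n * ‖x‖ := fun n x =>
    (hb₀ n x).trans (mul_le_mul_of_nonneg_right (le_max_left _ _) (norm_nonneg _))
  have key : ∀ (n : ℕ) (v : K n),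
      ‖((Tn n v : K n) : X) - ((Submodule.orthogonalProjectionOnto (K n) (T v) : K n) : X)‖ ≤ ε n * ‖(v : X)‖ := by
    intro n v
    have := hb n (v : X)
    rwa [Submodule.orthogonalProjectionOnto_mem_subspace_eq_self] at this
  have hproj : ∀ (n : ℕ) (z : X), ‖((Submodule.orthogonalProjectionOnto (K n) z : K n) : X)‖ ≤ ‖z‖ := by
    intro n z
    simpa using
      (Submodule.orthogonalProjectionOnto (K n)).le_of_opNorm_le (Submodule.orthogonalProjectionOnto_norm_le (K n)) z
  constructor
  · intro x₀ x hx
    have hb0 := happrox x₀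
    have hbound : ∀ n, ‖((Tn n (x n) : K n) : X) - ((Submodule.orthogonalProjectionOnto (K n) (T x₀) : K n) : X)‖
        ≤ ε n * (‖(x n : X) - ((Submodule.orthogonalProjectionOnto (K n) x₀ : K n) : X)‖ + ‖x₀‖)
          + ‖T‖ * (‖(x n : X) - ((Submodule.orthogonalProjectionOnto (K n) x₀ : K n) : X)‖
              + ‖((Submodule.orthogonalProjectionOnto (K n) x₀ : K n) : X) - x₀‖) := by
      intro n
      have h1 := key n (x n)
      have h2 : ‖((Submodule.orthogonalProjectionOnto (K n) (T (x n)) : K n) : X)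
          - ((Submodule.orthogonalProjectionOnto (K n) (T x₀) : K n) : X)‖
          ≤ ‖T‖ * (‖(x n : X) - ((Submodule.orthogonalProjectionOnto (K n) x₀ : K n) : X)‖
              + ‖((Submodule.orthogonalProjectionOnto (K n) x₀ : K n) : X) - x₀‖) := by
        have heq : ((Submodule.orthogonalProjectionOnto (K n) (T (x n)) : K n) : X)
            - ((Submodule.orthogonalProjectionOnto (K n) (T x₀) : K n) : X)
            = ((Submodule.orthogonalProjectionOnto (K n) (T (x n) - T x₀) : K n) : X) := by
          rw [map_sub]; rfl
        rw [heq]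
        calc ‖((Submodule.orthogonalProjectionOnto (K n) (T (x n) - T x₀) : K n) : X)‖
            ≤ ‖T (x n) - T x₀‖ := hproj n _
          _ = ‖T ((x n : X) - x₀)‖ := by rw [map_sub]
          _ ≤ ‖T‖ * ‖(x n : X) - x₀‖ := T.le_opNorm _
          _ ≤ ‖T‖ * (‖(x n : X) - ((Submodule.orthogonalProjectionOnto (K n) x₀ : K n) : X)‖
              + ‖((Submodule.orthogonalProjectionOnto (K n) x₀ : K n) : X) - x₀‖) := by
              gcongr
              exact norm_sub_le_norm_sub_add_norm_sub _ _ _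
      have h3 : ‖(x n : X)‖ ≤ ‖(x n : X) - ((Submodule.orthogonalProjectionOnto (K n) x₀ : K n) : X)‖ + ‖x₀‖ := by
        have h5 : ‖(x n : X)‖ ≤ ‖(x n : X) - ((Submodule.orthogonalProjectionOnto (K n) x₀ : K n) : X)‖
            + ‖((Submodule.orthogonalProjectionOnto (K n) x₀ : K n) : X)‖ := by
          simpa using norm_add_le ((x n : X) - ((Submodule.orthogonalProjectionOnto (K n) x₀ : K n) : X))
            ((Submodule.orthogonalProjectionOnto (K n) x₀ : K n) : X)
        exact h5.trans (by gcongr; exact hproj n x₀)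
      calc ‖((Tn n (x n) : K n) : X) - ((Submodule.orthogonalProjectionOnto (K n) (T x₀) : K n) : X)‖
          ≤ ‖((Tn n (x n) : K n) : X) - ((Submodule.orthogonalProjectionOnto (K n) (T (x n)) : K n) : X)‖
            + ‖((Submodule.orthogonalProjectionOnto (K n) (T (x n)) : K n) : X)
              - ((Submodule.orthogonalProjectionOnto (K n) (T x₀) : K n) : X)‖ :=
            norm_sub_le_norm_sub_add_norm_sub _ _ _
        _ ≤ ε n * ‖(x n : X)‖
            + ‖T‖ * (‖(x n : X) - ((Submodule.orthogonalProjectionOnto (K n) x₀ : K n) : X)‖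
              + ‖((Submodule.orthogonalProjectionOnto (K n) x₀ : K n) : X) - x₀‖) := by gcongr
        _ ≤ _ := add_le_add (mul_le_mul_of_nonneg_left h3 (hεnn n)) le_rfl
    refine squeeze_zero (fun n => norm_nonneg _) hbound ?_
    have h6 : Tendsto (fun n => ε n * (‖(x n : X)
        - ((Submodule.orthogonalProjectionOnto (K n) x₀ : K n) : X)‖ + ‖x₀‖)
        + ‖T‖ * (‖(x n : X) - ((Submodule.orthogonalProjectionOnto (K n) x₀ : K n) : X)‖
          + ‖((Submodule.orthogonalProjectionOnto (K n) x₀ : K n) : X) - x₀‖)) atTop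
        (𝓝 (0 * (0 + ‖x₀‖) + ‖T‖ * (0 + 0))) :=
      (hε.mul (hx.add tendsto_const_nhds)).add (tendsto_const_nhds.mul (hx.add hb0))
    simpa using h6
  · intro x C hC
    set C' : ℝ := max C 0 with hC'def
    have hC' : ∀ n, ‖(x n : X)‖ ≤ C' := fun n => (hC n).trans (le_max_left _ _)
    have hmem : ∀ n, T (x n : X) ∈ closure (T '' Metric.closedBall 0 C') := by
      intro n
      exact subset_closure ⟨(x n : X), by
        simpa [Metric.mem_closedBall, dist_eq_norm] using hC' n, rfl⟩
    have hcpt : IsCompact (closure (T '' Metric.closedBall (0 : X) C')) := by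
      have := IsCompactOperator.isCompact_closure_image_closedBall
        (𝕜₁ := ℂ) (f := (T : X →ₗ[ℂ] X)) hT C'
      simpa using this
    obtain ⟨y, -, φ, hφ, hconv⟩ := hcpt.tendsto_subseq hmem
    refine ⟨φ, y, hφ, ?_⟩
    have hbound : ∀ k, ‖((Tn (φ k) (x (φ k)) : K (φ k)) : X)
        - ((Submodule.orthogonalProjectionOnto (K (φ k)) y : K (φ k)) : X)‖
        ≤ ε (φ k) * C' + ‖T (x (φ k) : X) - y‖ := by
      intro k
      have h1 := key (φ k) (x (φ k))
      have h2 : ‖((Submodule.orthogonalProjectionOnto (K (φ k)) (T (x (φ k) : X)) : K (φ k)) : X)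
          - ((Submodule.orthogonalProjectionOnto (K (φ k)) y : K (φ k)) : X)‖ ≤ ‖T (x (φ k) : X) - y‖ := by
        have heq : ((Submodule.orthogonalProjectionOnto (K (φ k)) (T (x (φ k) : X)) : K (φ k)) : X)
            - ((Submodule.orthogonalProjectionOnto (K (φ k)) y : K (φ k)) : X)
            = ((Submodule.orthogonalProjectionOnto (K (φ k)) (T (x (φ k) : X) - y) : K (φ k)) : X) := by
          rw [map_sub]; rfl
        rw [heq]; exact hproj _ _
      calc ‖((Tn (φ k) (x (φ k)) : K (φ k)) : X)
            - ((Submodule.orthogonalProjectionOnto (K (φ k)) y : K (φ k)) : X)‖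
          ≤ ‖((Tn (φ k) (x (φ k)) : K (φ k)) : X)
              - ((Submodule.orthogonalProjectionOnto (K (φ k)) (T (x (φ k) : X)) : K (φ k)) : X)‖
            + ‖((Submodule.orthogonalProjectionOnto (K (φ k)) (T (x (φ k) : X)) : K (φ k)) : X)
              - ((Submodule.orthogonalProjectionOnto (K (φ k)) y : K (φ k)) : X)‖ :=
            norm_sub_le_norm_sub_add_norm_sub _ _ _
        _ ≤ ε (φ k) * C' + ‖T (x (φ k) : X) - y‖ := by
            gcongr
            exact h1.trans (mul_le_mul_of_nonneg_left (hC' _) (hεnn _))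
    refine squeeze_zero (fun k => norm_nonneg _) hbound ?_
    have h1 : Tendsto (fun k => ε (φ k) * C') atTop (𝓝 (0 * C')) :=
      (hε.comp hφ.tendsto_atTop).mul tendsto_const_nhds
    have h2 : Tendsto (fun k => ‖T (x (φ k) : X) - y‖) atTop (𝓝 0) := by
      have h3 := hconv
      rw [tendsto_iff_norm_sub_tendsto_zero] at h3
      exact h3
    simpa using h1.add h2
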